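/- Suppose F ⊆ binomial([n],k) satisfies: for any ℓ distinct members F₁,…,F_ℓ of F, ∑_{i<j} |F_i ∩ F_j| ≥ binomial(ℓ,2)(t-1) + binomial(ℓ-1,2). Let G₁,…,G_m ∈ F be a maximal collection with pairwise intersections of size at most t-1, and set W = G₁ ∪ ⋯ ∪ G_m. Then every F ∈ F satisfies |F ∩ W| ≥ t. -/
import Mathlib


open Finset

theorem stmt_11 (n k t ℓ m : ℕ) (ht : 1 ≤ t) (hℓ : 3 ≤ ℓ) (hk : t + ℓ - 2 ≤ k)
    (hkn : k ≤ n)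
    (F : Finset (Finset ℕ))
    (hF : ∀ A ∈ F, A ⊆ Finset.Icc 1 n ∧ A.card = k)
    (hcond : ∀ G : Fin ℓ → Finset ℕ, Function.Injective G → (∀ i, G i ∈ F) →
      Nat.choose ℓ 2 * (t - 1) + Nat.choose (ℓ - 1) 2 ≤
        ∑ i : Fin ℓ, ∑ j : Fin ℓ, if i < j then (G i ∩ G j).card else 0)
    (G : Fin m → Finset ℕ) (hGinj : Function.Injective G)
    (hGmem : ∀ i, G i ∈ F)
    (hGsmall : ∀ i j, i ≠ j → (G i ∩ G j).card ≤ t - 1)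
    (hmax : ∀ H ∈ F, (∀ i, H ≠ G i) → ∃ i, t ≤ (H ∩ G i).card) :
    ∀ H ∈ F, t ≤ (H ∩ Finset.univ.biUnion G).card := by
  intro H hH
  by_cases h : ∀ i, H ≠ G i
  · obtain ⟨i, hi⟩ := hmax H hH h
    exact hi.trans (Finset.card_le_card (Finset.inter_subset_inter_left
      (Finset.subset_biUnion_of_mem G (Finset.mem_univ i))))
  · push_neg at h
    obtain ⟨i, hi⟩ := h
    have hsub : H ⊆ H ∩ Finset.univ.biUnion G := by
      refine Finset.subset_inter (le_refl _) ?_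
      rw [hi]
      exact Finset.subset_biUnion_of_mem G (Finset.mem_univ i)
    calc t ≤ k := le_trans (by omega) hk
      _ = H.card := ((hF H hH).2).symm
      _ ≤ _ := Finset.card_le_card hsub
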